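/- Suppose the underlying graph Γ of an E-GCM graph (Γ,M) is a loop on n ≥ 3 nodes (the nodes can be numbered γ_1,…,γ_n so that each γ_i is adjacent precisely to γ_{i−1} and γ_{i+1}, indices taken mod n), and that M_{ij}M_{ji} = 1 for every edge of Γ. Then (Γ,M) is not admissible. -/

import Mathlib

/-- An E-generalized Cartan matrix (E-GCM) on a finite index type `ι`. -/
structure EGCM (ι : Type*) [Fintype ι] where
  /-- the matrix of amplitudes -/
  M : ι → ι → ℝ
  diag : ∀ i, M i i = 2
  offDiag_nonpos : ∀ i j, i ≠ j → M i j ≤ 0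
  zero_iff : ∀ i j, M i j = 0 ↔ M j i = 0
  prod_cond : ∀ i j, i ≠ j → M i j * M j i ≠ 0 →
    4 ≤ M i j * M j i ∨
      ∃ k : ℕ, 3 ≤ k ∧ M i j * M j i = 4 * Real.cos (Real.pi / k) ^ 2

namespace EGCM

variable {ι : Type*} [Fintype ι]

/-- Adjacency in the E-GCM graph. -/
def Adj (E : EGCM ι) (i j : ι) : Prop := i ≠ j ∧ E.M i j ≠ 0

/-- The underlying simple graph of an E-GCM graph. -/
def graph (E : EGCM ι) : SimpleGraph ι where
  Adj i j := i ≠ j ∧ E.M i j ≠ 0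
  symm := by
    refine ⟨?_⟩
    intro i j ⟨h1, h2⟩
    exact ⟨h1.symm, fun hz => h2 ((E.zero_iff j i).mp hz)⟩
  loopless := by refine ⟨?_⟩; intro i ⟨h, _⟩; exact h rfl

/-- The result of firing node `i` from position `lam`. -/
def fire (E : EGCM ι) (lam : ι → ℝ) (i : ι) : ι → ℝ := fun j => lam j - E.M i j * lam i

/-- The position resulting from firing the nodes in the list `s` in order. -/
def fireList (E : EGCM ι) (lam : ι → ℝ) : List ι → (ι → ℝ)
  | [] => lam
  | i :: s => fireList E (E.fire lam i) s

/-- The firing sequence `s` is legal from position `lam`: at each step the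
fired node carries a positive number. -/
def Legal (E : EGCM ι) (lam : ι → ℝ) : List ι → Prop
  | [] => True
  | i :: s => 0 < lam i ∧ Legal E (E.fire lam i) s

/-- A position with no positive entries. -/
def Terminal (lam : ι → ℝ) : Prop := ∀ i, lam i ≤ 0

/-- `s` is a (convergent) game sequence from `lam`: a legal firing sequence whose
resulting position has no positive entries. -/
def IsGameSeq (E : EGCM ι) (lam : ι → ℝ) (s : List ι) : Prop :=
  E.Legal lam s ∧ Terminal (E.fireList lam s)

/-- The position after `k` steps of the infinite firing sequence `f`. -/
def posAt (E : EGCM ι) (lam : ι → ℝ) (f : ℕ → ι) : ℕ → (ι → ℝ)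
  | 0 => lam
  | k + 1 => E.fire (posAt E lam f k) (f k)

/-- `f` is a divergent game sequence from `lam`: an infinite sequence of legal firings. -/
def DivergentSeq (E : EGCM ι) (lam : ι → ℝ) (f : ℕ → ι) : Prop :=
  ∀ k, 0 < E.posAt lam f k (f k)

/-- A dominant position: all numbers nonnegative. -/
def Dominant (lam : ι → ℝ) : Prop := ∀ i, 0 ≤ lam i

/-- A strongly dominant position: all numbers positive. -/
def StronglyDominant (lam : ι → ℝ) : Prop := ∀ i, 0 < lam i

/-- The E-GCM graph is admissible if some nonzero dominant position has a
convergent game sequence. -/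
def Admissible (E : EGCM ι) : Prop :=
  ∃ lam : ι → ℝ, Dominant lam ∧ lam ≠ 0 ∧ ∃ s : List ι, E.IsGameSeq lam s

/-- The E-GCM graph is strongly admissible if every nonzero dominant position has a
convergent game sequence. -/
def StronglyAdmissible (E : EGCM ι) : Prop :=
  ∀ lam : ι → ℝ, Dominant lam → lam ≠ 0 → ∃ s : List ι, E.IsGameSeq lam s

/-- A position is adjacency-free if no position reachable from it by a legal firing
sequence (i.e. no intermediate position of a game sequence) has positive numbers at
two adjacent nodes. -/
def AdjacencyFree (E : EGCM ι) (lam : ι → ℝ) : Prop :=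
  ∀ s : List ι, E.Legal lam s →
    ¬ ∃ i j, E.Adj i j ∧ 0 < E.fireList lam s i ∧ 0 < E.fireList lam s j

/-- A `J`-complement-dominant position: zero exactly at the nodes of `J`, positive elsewhere. -/
def JcDominant (J : Set ι) (lam : ι → ℝ) : Prop :=
  (∀ j ∈ J, lam j = 0) ∧ ∀ i ∉ J, 0 < lam i

open Classical in
/-- The Coxeter exponent `m i j` attached to the E-GCM: `m i j = k` if
`M i j * M j i = 4 cos²(π/k)` with `k ≥ 2`, and `m i j = 0` (representing `∞`)
if `M i j * M j i ≥ 4`. -/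
noncomputable def m (E : EGCM ι) (i j : ι) : ℕ :=
  if i = j then 1
  else if h : ∃ k : ℕ, 2 ≤ k ∧ E.M i j * E.M j i = 4 * Real.cos (Real.pi / k) ^ 2
    then Nat.find h else 0

theorem m_symm (E : EGCM ι) (i j : ι) : E.m i j = E.m j i := by
  unfold m
  rcases eq_or_ne i j with rfl | hij
  · simp
  · rw [if_neg hij, if_neg (Ne.symm hij)]
    by_cases h : ∃ k : ℕ, 2 ≤ k ∧ E.M i j * E.M j i = 4 * Real.cos (Real.pi / k) ^ 2
    · have h' : ∃ k : ℕ, 2 ≤ k ∧ E.M j i * E.M i j = 4 * Real.cos (Real.pi / k) ^ 2 := by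
        rw [mul_comm]; exact h
      rw [dif_pos h, dif_pos h']
      exact le_antisymm (Nat.find_mono fun n hn => by rwa [mul_comm (E.M i j)])
        (Nat.find_mono fun n hn => by rwa [mul_comm (E.M j i)])
    · have h' : ¬ ∃ k : ℕ, 2 ≤ k ∧ E.M j i * E.M i j = 4 * Real.cos (Real.pi / k) ^ 2 := by
        rw [mul_comm]; exact h
      rw [dif_neg h, dif_neg h']

theorem m_offDiag (E : EGCM ι) (i j : ι) (h : i ≠ j) : E.m i j ≠ 1 := by
  classical
  unfold m
  rw [if_neg h]
  split
  · rename_i hex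
    have := Nat.find_spec hex
    omega
  · omega

/-- The Coxeter matrix associated to the E-GCM. -/
noncomputable def cox (E : EGCM ι) : CoxeterMatrix ι where
  M := fun i j => E.m i j
  isSymm := by
    ext i j
    exact E.m_symm j i
  diagonal := by intro i; simp [m]
  off_diagonal := fun i j h => E.m_offDiag i j h

/-- The reflection `S i` of the geometric representation:
`S i v = v − 2 B(α i, v) • α i` where `B (α i, α j) = M i j / 2`. -/
noncomputable def S [DecidableEq ι] (E : EGCM ι) (i : ι) : Module.End ℝ (ι → ℝ) :=
  LinearMap.id -
    LinearMap.smulRight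
      ((∑ k, E.M i k • LinearMap.proj k : (ι → ℝ) →ₗ[ℝ] ℝ)) (Pi.single i 1)

end EGCM

section Roots

variable {ι : Type*} [Fintype ι] [DecidableEq ι]
variable {W : Type*} [Group W]

/-- `α` is a root for the geometric representation `σ`. -/
def IsRoot (σ : W →* Module.End ℝ (ι → ℝ)) (α : ι → ℝ) : Prop :=
  ∃ (w : W) (i : ι), σ w (Pi.single i 1) = α

/-- `α` is a positive root. -/
def IsPosRoot (σ : W →* Module.End ℝ (ι → ℝ)) (α : ι → ℝ) : Prop :=
  IsRoot σ α ∧ ∀ i, 0 ≤ α i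

/-- `α` is a negative root. -/
def IsNegRoot (σ : W →* Module.End ℝ (ι → ℝ)) (α : ι → ℝ) : Prop :=
  IsRoot σ α ∧ ∀ i, α i ≤ 0

/-- `N_M(w)`: the set of positive roots sent to negative roots by `w`. -/
def NM (σ : W →* Module.End ℝ (ι → ℝ)) (w : W) : Set (ι → ℝ) :=
  {α | IsPosRoot σ α ∧ IsNegRoot σ (σ w α)}

/-- `𝔖_M(α)`: the positive roots which are real multiples of `α`. -/
def Sfrak (σ : W →* Module.End ℝ (ι → ℝ)) (α : ι → ℝ) : Set (ι → ℝ) :=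
  {β | (∃ K : ℝ, β = K • α) ∧ IsPosRoot σ β}

end Roots

section Parabolic

variable {ι : Type*} {W : Type*} [Group W]

/-- The standard parabolic subgroup `W_J`. -/
def parabolic {M : CoxeterMatrix ι} (cs : CoxeterSystem M W) (J : Set ι) : Subgroup W :=
  Subgroup.closure (cs.simple '' J)

/-- The set `W^J` of minimal coset representatives. -/
def minReps {M : CoxeterMatrix ι} (cs : CoxeterSystem M W) (J : Set ι) : Set W :=
  {w | ∀ j ∈ J, cs.length w < cs.length (w * cs.simple j)}

end Parabolic

namespace EGCM

variable {ι : Type*} [Fintype ι]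

/-- The E-GCM subgraph induced on a subset `I` of the nodes. -/
def restrict (E : EGCM ι) (I : Finset ι) : EGCM {x // x ∈ I} where
  M i j := E.M i j
  diag i := E.diag i
  offDiag_nonpos i j h := E.offDiag_nonpos i j (fun hc => h (Subtype.ext hc))
  zero_iff i j := E.zero_iff i j
  prod_cond i j h := E.prod_cond i j (fun hc => h (Subtype.ext hc))

/-- Adjacent nodes `i`, `j` are odd-neighborly if `m i j` is odd. -/
def OddNeighborly (E : EGCM ι) (i j : ι) : Prop := E.Adj i j ∧ Odd (E.m i j)

/-- The factor `K_{j i} = −(M j i) / (2 cos (π / m i j))` attached to an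
odd-neighborly pair `(i, j)`. -/
noncomputable def Kfac (E : EGCM ι) (i j : ι) : ℝ :=
  -E.M j i / (2 * Real.cos (Real.pi / (E.m i j : ℝ)))

/-- `Π_P` for the ON-path `P` given by a list of nodes: the product of the factors
`K` along consecutive pairs. -/
noncomputable def piON (E : EGCM ι) : List ι → ℝ
  | [] => 1
  | [_] => 1
  | a :: b :: t => piON E (b :: t) * E.Kfac a b

/-- `y` can be reached from `x` by a path of odd neighbors. -/
def ONReach (E : EGCM ι) (x y : ι) : Prop :=
  ∃ l : List ι, l.Chain' E.OddNeighborly ∧ l.head? = some x ∧ l.getLast? = some y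

/-- The ON-connected component containing `x` is unital ON-cyclic: every ON-cycle
whose nodes lie in this component has `Π = 1`. -/
def UnitalONCyclicAt (E : EGCM ι) (x : ι) : Prop :=
  ∀ l : List ι, l ≠ [] → l.Chain' E.OddNeighborly → (∀ y ∈ l, E.ONReach x y) →
    l.head? = l.getLast? → E.piON l = 1

/-- The E-GCM graph has an odd asymmetry: an odd-neighborly pair `i`, `j` with
`M i j ≠ M j i`. -/
def HasOddAsymmetry (E : EGCM ι) : Prop :=
  ∃ i j, E.OddNeighborly i j ∧ E.M i j ≠ E.M j i

end EGCM

section FullComm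

variable {ι : Type*} [Fintype ι] {W : Type*} [Group W]

/-- An elementary simplification of commuting type: interchange adjacent letters
`x`, `y` with `m x y = 2`. -/
def CommMove (E : EGCM ι) (l l' : List ι) : Prop :=
  ∃ (u v : List ι) (x y : ι), E.m x y = 2 ∧ l = u ++ x :: y :: v ∧ l' = u ++ y :: x :: v

/-- `w` is fully commutative: any reduced word for `w` can be obtained from any other
by a sequence of elementary simplifications of commuting type. -/
def FullyCommutative (E : EGCM ι) {W : Type*} [Group W] (cs : CoxeterSystem E.cox W)
    (w : W) : Prop :=
  ∀ l l' : List ι,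
    cs.IsReduced l.reverse → cs.wordProd l.reverse = w →
    cs.IsReduced l'.reverse → cs.wordProd l'.reverse = w →
    Relation.ReflTransGen (CommMove E) l l'

end FullComm

/-- The Coxeter graph of a Coxeter matrix: an edge between `i ≠ j` iff `m i j ≠ 2`. -/
def coxGraph {ι : Type*} (cm : CoxeterMatrix ι) : SimpleGraph ι where
  Adj i j := i ≠ j ∧ cm i j ≠ 2
  symm := by
    refine ⟨?_⟩
    intro i j ⟨h1, h2⟩
    exact ⟨h1.symm, by rwa [cm.symmetric j i]⟩
  loopless := by refine ⟨?_⟩; intro i ⟨h, _⟩; exact h rfl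

/-- The E-GCM `E` has associated exponents given by the Coxeter matrix `cm`:
`M i j * M j i = 4 cos² (π / cm i j)` when `cm i j ≠ 0` and `M i j * M j i ≥ 4`
when `cm i j = 0` (representing `∞`), with `M i j = 0` iff `cm i j = 2`. -/
def Compat {ι : Type*} [Fintype ι] (E : EGCM ι) (cm : CoxeterMatrix ι) : Prop :=
  ∀ i j : ι, i ≠ j →
    (E.M i j = 0 ↔ cm i j = 2) ∧
    ((cm i j = 0 ∧ 4 ≤ E.M i j * E.M j i) ∨
      (cm i j ≠ 0 ∧ E.M i j * E.M j i = 4 * Real.cos (Real.pi / (cm i j : ℝ)) ^ 2))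


open Fin.NatCast

section LoopAux

private noncomputable def loopCseq {n : ℕ} [NeZero n] (u : Fin n → ℝ) (s : ℝ) : ℕ → ℝ
  | 0 => 1
  | k + 1 => s / u (k : Fin n) * loopCseq u s k

private lemma loopCseq_pos {n : ℕ} [NeZero n] {u : Fin n → ℝ} {s : ℝ}
    (hu : ∀ i, 0 < u i) (hs : 0 < s) : ∀ k, 0 < loopCseq u s k
  | 0 => one_pos
  | k + 1 => mul_pos (div_pos hs (hu _)) (loopCseq_pos hu hs k)

private lemma loopCseq_prod {n : ℕ} [NeZero n] {u : Fin n → ℝ} {s : ℝ}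
    (hu : ∀ i, u i ≠ 0) :
    ∀ k, loopCseq u s k * ∏ m ∈ Finset.range k, u (m : Fin n) = s ^ k
  | 0 => by simp [loopCseq]
  | k + 1 => by
    have ih := loopCseq_prod (u := u) (s := s) hu k
    rw [Finset.prod_range_succ, loopCseq, pow_succ]
    have huk := hu (k : Fin n)
    field_simp
    linear_combination s * ih

private lemma phi_mono {ι : Type*} [Fintype ι] (E : EGCM ι) (c : ι → ℝ)
    (hc : ∀ i, ∑ j, c j * E.M i j ≤ 0) :
    ∀ (l : List ι) (lam : ι → ℝ), E.Legal lam l →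
      ∑ j, c j * lam j ≤ ∑ j, c j * E.fireList lam l j
  | [], lam, _ => le_refl _
  | i :: t, lam, h => by
    obtain ⟨hpos, hleg⟩ := h
    have step : ∑ j, c j * lam j ≤ ∑ j, c j * E.fire lam i j := by
      have heq : ∑ j, c j * E.fire lam i j
          = ∑ j, c j * lam j - (∑ j, c j * E.M i j) * lam i := by
        simp only [EGCM.fire, mul_sub, Finset.sum_sub_distrib, Finset.sum_mul]
        ring_nf
        congr 1; exact Finset.sum_congr rfl (fun x _ => by ring)
      rw [heq]
      have := mul_nonpos_of_nonpos_of_nonneg (hc i) hpos.le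
      linarith
    exact step.trans (phi_mono E c hc t (E.fire lam i) hleg)

end LoopAux

/-- **Lemma 6.4.** An E-GCM graph whose underlying graph is a loop on `n ≥ 3` nodes and
all of whose edge amplitude products are `1` is not admissible. -/
theorem egcm_loop_not_admissible (n : ℕ) (hn : 3 ≤ n) (E : EGCM (Fin n))
    (hadj : ∀ i j : Fin n,
      E.Adj i j ↔ (j.val = (i.val + 1) % n ∨ i.val = (j.val + 1) % n))
    (hprod : ∀ i j : Fin n, E.Adj i j → E.M i j * E.M j i = 1) :
    ¬ E.Admissible := by
  haveI : NeZero n := ⟨by omega⟩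
  have h1n : 1 % n = 1 := Nat.mod_eq_of_lt (by omega)
  -- values of i+1 and i-1
  have hvadd : ∀ i : Fin n, ((i + 1 : Fin n) : ℕ) = (i.val + 1) % n := by
    intro i
    rw [Fin.add_def]
    simp only [Fin.val_one', h1n]
  have hvsub : ∀ i : Fin n, ((i - 1 : Fin n) : ℕ) = (n - 1 + i.val) % n := by
    intro i
    rw [Fin.sub_def]
    simp only [Fin.val_one', h1n]
  have hvsub' : ∀ i : Fin n,
      ((i - 1 : Fin n) : ℕ) = if i.val = 0 then n - 1 else i.val - 1 := by
    intro i
    rw [hvsub]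
    split
    · rename_i h0
      rw [h0, Nat.add_zero, Nat.mod_eq_of_lt (by omega)]
    · rename_i h0
      have hlt := i.isLt
      have he : n - 1 + i.val = n + (i.val - 1) := by omega
      rw [he, Nat.add_mod_left, Nat.mod_eq_of_lt (by omega)]
  have hvadd' : ∀ i : Fin n,
      ((i + 1 : Fin n) : ℕ) = if i.val + 1 = n then 0 else i.val + 1 := by
    intro i
    rw [hvadd]
    split
    · rename_i h0; rw [h0, Nat.mod_self]
    · exact Nat.mod_eq_of_lt (by have := i.isLt; omega)
  -- distinctness of i-1, i, i+1
  have d1 : ∀ i : Fin n, i - 1 ≠ i := by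
    intro i h
    have hv := congrArg Fin.val h
    rw [hvsub' i] at hv
    have := i.isLt
    split at hv <;> omega
  have d2 : ∀ i : Fin n, i ≠ i + 1 := by
    intro i h
    have hv := congrArg Fin.val h
    rw [hvadd' i] at hv
    have := i.isLt
    split at hv <;> omega
  have d3 : ∀ i : Fin n, i - 1 ≠ i + 1 := by
    intro i h
    have hv := congrArg Fin.val h
    rw [hvsub' i, hvadd' i] at hv
    have := i.isLt
    split at hv <;> split at hv <;> omega
  have dsub : ∀ i : Fin n, (i - 1) + 1 = i := fun i => sub_add_cancel i 1
  -- every node is adjacent to its successor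
  have hadjsucc : ∀ i : Fin n, E.Adj i (i + 1) := by
    intro i
    rw [hadj]
    exact Or.inl (hvadd i)
  -- the amplitude to the successor
  obtain ⟨u, hMu, hu⟩ : ∃ u : Fin n → ℝ,
      (∀ i, E.M i (i + 1) = -u i) ∧ (∀ i, 0 < u i) := by
    refine ⟨fun i => -E.M i (i + 1), fun i => by ring, fun i => ?_⟩
    have hA := hadjsucc i
    have hle := E.offDiag_nonpos i (i + 1) hA.1
    have hne := hA.2
    rcases lt_or_eq_of_le hle with h | h
    · simpa using h
    · exact absurd h hne
  have hu' : ∀ i : Fin n, u i ≠ 0 := fun i => (hu i).ne'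
  -- the product relation across each edge
  have hedge : ∀ i : Fin n, u i * (-E.M (i + 1) i) = 1 := by
    intro i
    have := hprod i (i + 1) (hadjsucc i)
    rw [hMu i] at this
    linarith
  -- amplitudes vanish away from neighbors
  have hzero : ∀ i j : Fin n, j ≠ i → j ≠ i + 1 → j ≠ i - 1 → E.M i j = 0 := by
    intro i j hne h1 h2
    by_contra hM
    have hA : E.Adj i j := ⟨fun h => hne h.symm, hM⟩
    rcases (hadj i j).mp hA with h | h
    · exact h1 (Fin.ext (by rw [hvadd i]; exact h))
    · have : i = j + 1 := Fin.ext (by rw [hvadd j]; exact h)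
      apply h2
      rw [this]
      exact (add_sub_cancel_right j 1).symm
  -- the scaling constant
  obtain ⟨s, hs, hsn⟩ : ∃ s : ℝ, 0 < s ∧ s ^ n = ∏ i : Fin n, u i := by
    have hP : 0 < ∏ i : Fin n, u i := Finset.prod_pos (fun i _ => hu i)
    refine ⟨(∏ i : Fin n, u i) ^ ((n : ℝ)⁻¹), Real.rpow_pos_of_pos hP _, ?_⟩
    rw [← Real.rpow_natCast ((∏ i : Fin n, u i) ^ ((n : ℝ)⁻¹)) n, ← Real.rpow_mul hP.le,
      inv_mul_cancel₀ (by exact_mod_cast (by omega : n ≠ 0)), Real.rpow_one]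
  -- the positive vector c
  obtain ⟨c, hcpos, hcstep⟩ : ∃ c : Fin n → ℝ,
      (∀ i, 0 < c i) ∧ (∀ i, u i * c (i + 1) = s * c i) := by
    refine ⟨fun i => loopCseq u s i.val, fun i => loopCseq_pos hu hs i.val, fun i => ?_⟩
    have hstepnat : ∀ k : ℕ,
        loopCseq u s (k + 1) = s / u (k : Fin n) * loopCseq u s k := fun k => rfl
    have hcseqn : loopCseq u s n = 1 := by
      have h := loopCseq_prod (u := u) (s := s) hu' n
      have hprodn : (∏ m ∈ Finset.range n, u (m : Fin n)) = ∏ i : Fin n, u i := by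
        rw [← Fin.prod_univ_eq_prod_range (fun m => u (m : Fin n)) n]
        exact Finset.prod_congr rfl (fun i _ => by rw [Fin.cast_val_eq_self])
      rw [hprodn, hsn] at h
      have hP : (∏ i : Fin n, u i) ≠ 0 := (Finset.prod_pos (fun i _ => hu i)).ne'
      field_simp at h
      exact h
    rcases Nat.lt_or_ge (i.val + 1) n with hlt | hge
    · have hv : ((i + 1 : Fin n) : ℕ) = i.val + 1 := by
        rw [hvadd' i]; split <;> omega
      simp only [hv, hstepnat i.val, Fin.cast_val_eq_self]
      field_simp [hu' i]
    · have hival : i.val = n - 1 := by have := i.isLt; omega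
      have hv : ((i + 1 : Fin n) : ℕ) = 0 := by
        rw [hvadd' i]; split <;> omega
      have hni : ((n - 1 : ℕ) : Fin n) = i := by
        apply Fin.ext
        rw [Fin.val_natCast, Nat.mod_eq_of_lt (by omega), hival]
      have h9 := hstepnat (n - 1)
      rw [show (n - 1) + 1 = n by omega, hni, hcseqn] at h9
      simp only [hv, hival]
      rw [show loopCseq u s 0 = 1 from rfl, mul_one]
      field_simp [hu' i] at h9
      linarith
  -- the key inequality: ∑ c j * M i j ≤ 0
  have hkey : ∀ i : Fin n, ∑ j, c j * E.M i j ≤ 0 := by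
    intro i
    have hvanish : ∀ x ∈ Finset.univ, x ∉ ({i - 1, i, i + 1} : Finset (Fin n)) →
        c x * E.M i x = 0 := by
      intro x _ hx
      simp only [Finset.mem_insert, Finset.mem_singleton, not_or] at hx
      rw [hzero i x hx.2.1 hx.2.2 hx.1, mul_zero]
    have hsum : ∑ j, c j * E.M i j
        = c (i - 1) * E.M i (i - 1) + c i * E.M i i + c (i + 1) * E.M i (i + 1) := by
      rw [← Finset.sum_subset (Finset.subset_univ ({i - 1, i, i + 1} : Finset (Fin n)))
        hvanish]
      rw [Finset.sum_insert (by
        simp only [Finset.mem_insert, Finset.mem_singleton, not_or]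
        exact ⟨d1 i, d3 i⟩)]
      rw [Finset.sum_insert (by
        simp only [Finset.mem_singleton]
        exact d2 i)]
      rw [Finset.sum_singleton]
      ring
    rw [hsum, E.diag i, hMu i]
    -- relations for the three terms
    have e1 : u (i - 1) * (-E.M i (i - 1)) = 1 := by
      have := hedge (i - 1)
      rwa [dsub i] at this
    have e2 : u i * c (i + 1) = s * c i := hcstep i
    have e3 : u (i - 1) * c i = s * c (i - 1) := by
      have := hcstep (i - 1)
      rwa [dsub i] at this
    have k1 : s * (c (i - 1) * E.M i (i - 1)) = -(c i) := by
      have hum := hu' (i - 1)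
      have hMexp : E.M i (i - 1) = -(u (i - 1))⁻¹ := by
        field_simp at e1 ⊢
        linarith
      rw [hMexp]
      field_simp
      linarith [e3]
    have hci := hcpos i
    nlinarith [mul_nonneg hci.le (sq_nonneg (s - 1)), k1, e2, hs,
      mul_pos hs (hcpos (i - 1)), mul_pos hs (hcpos (i + 1))]
  -- now derive the contradiction
  rintro ⟨lam, hdom, hne, seq, hleg, hterm⟩
  have hmono := phi_mono E c hkey seq lam hleg
  have hinit : 0 < ∑ j, c j * lam j := by
    obtain ⟨k, hk⟩ := Function.ne_iff.mp hne
    have hkpos : 0 < lam k := lt_of_le_of_ne (hdom k) (Ne.symm hk)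
    apply Finset.sum_pos' (fun j _ => mul_nonneg (hcpos j).le (hdom j))
    exact ⟨k, Finset.mem_univ k, mul_pos (hcpos k) hkpos⟩
  have hfinal : ∑ j, c j * E.fireList lam seq j ≤ 0 := by
    apply Finset.sum_nonpos
    intro j _
    exact mul_nonpos_of_nonneg_of_nonpos (hcpos j).le (hterm j)
  linarith
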